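/- For p = 1, m, n natural with 0 ≤ n ≤ m, and real d₁ > −1: ∫₀^∞ z^(2n)/(z⁴+2d₁z²+1)^(m+1) dz = 2^(−m)·Σ_{j=0}^{m−n} 4^j·C(m−n+j, 2j)·∫₀^∞ z^(2(m−j))/((1+d₁)z²+2)^(m+1) dz. -/

import Mathlib

open Set MeasureTheory

open Finset in

lemma pascal2 (a b : ℕ) : (a+2).choose (b+2) = a.choose b + 2 * a.choose (b+1) + a.choose (b+2) := by
  rw [Nat.choose_succ_succ (a+1) (b+1), Nat.choose_succ_succ a b, Nat.choose_succ_succ a (b+1)]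
  ring

lemma pascal1 (a b : ℕ) : (a+1).choose (b+2) = a.choose (b+1) + a.choose (b+2) :=
  Nat.choose_succ_succ a (b+1)

noncomputable def polyA (r : ℕ) (t : ℝ) : ℝ :=
  ∑ j ∈ Finset.range (r+1), ((r+j).choose (2*j) : ℝ) * (t-1)^(2*j) * t^(r-j)

open Finset in
lemma polyA_rec (r : ℕ) (t : ℝ) :
    polyA (r+2) t = (t^2+1) * polyA (r+1) t - t^2 * polyA r t := by
  have hL : polyA (r+2) t
      = ((∑ j ∈ range (r+2), ((r+1+j).choose (2*j) : ℝ) * (t-1)^(2*j+2) * t^(r+1-j))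
        + ∑ j ∈ range (r+2), (2*((r+1+j).choose (2*j+1) : ℝ) + ((r+1+j).choose (2*j+2) : ℝ))
            * (t-1)^(2*j+2) * t^(r+1-j))
        + t^(r+2) := by
    unfold polyA
    rw [Finset.sum_range_succ', ← Finset.sum_add_distrib]
    congr 1
    · refine Finset.sum_congr rfl fun j hj => ?_
      rw [Finset.mem_range] at hj
      have e1 : r+2+(j+1) = (r+1+j)+2 := by omega
      have e2 : 2*(j+1) = 2*j+2 := by omega
      have e3 : r+2-(j+1) = r+1-j := by omega
      rw [e1, e2, e3, pascal2]
      push_cast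
      ring
    · simp
  have hQ : (t^2+1) * polyA (r+1) t
      = (∑ j ∈ range (r+2), ((r+1+j).choose (2*j) : ℝ) * (t-1)^(2*j+2) * t^(r+1-j))
        + ∑ j ∈ range (r+2), 2*((r+1+j).choose (2*j) : ℝ) * (t-1)^(2*j) * t^(r+2-j) := by
    unfold polyA
    rw [Finset.mul_sum, ← Finset.sum_add_distrib]
    refine Finset.sum_congr rfl fun j hj => ?_
    rw [Finset.mem_range] at hj
    have e1 : r+2-j = (r+1-j)+1 := by omega
    rw [e1, pow_succ]
    ring
  have hQ0 : t^2 * polyA r t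
      = ∑ j ∈ range (r+1), ((r+j).choose (2*j) : ℝ) * (t-1)^(2*j) * t^(r+2-j) := by
    unfold polyA
    rw [Finset.mul_sum]
    refine Finset.sum_congr rfl fun j hj => ?_
    rw [Finset.mem_range] at hj
    have e1 : r+2-j = (r-j)+2 := by omega
    rw [e1, pow_add]
    ring
  have hQs : (∑ j ∈ range (r+2), 2*((r+1+j).choose (2*j) : ℝ) * (t-1)^(2*j) * t^(r+2-j))
      = (∑ j ∈ range (r+1), (2*((r+1+j).choose (2*j+1) : ℝ) + 2*((r+1+j).choose (2*j+2) : ℝ))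
          * (t-1)^(2*j+2) * t^(r+1-j)) + 2*t^(r+2) := by
    rw [Finset.sum_range_succ']
    congr 1
    · refine Finset.sum_congr rfl fun j hj => ?_
      rw [Finset.mem_range] at hj
      have e1 : r+1+(j+1) = (r+1+j)+1 := by omega
      have e2 : 2*(j+1) = 2*j+2 := by omega
      have e3 : r+2-(j+1) = r+1-j := by omega
      rw [e1, e2, e3, pascal1]
      push_cast
      ring
    · simp
  have hQ0s : (∑ j ∈ range (r+1), ((r+j).choose (2*j) : ℝ) * (t-1)^(2*j) * t^(r+2-j))
      = (∑ j ∈ range r, ((r+1+j).choose (2*j+2) : ℝ) * (t-1)^(2*j+2) * t^(r+1-j)) + t^(r+2) := by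
    rw [Finset.sum_range_succ']
    congr 1
    · refine Finset.sum_congr rfl fun j hj => ?_
      rw [Finset.mem_range] at hj
      have e1 : r+(j+1) = r+1+j := by omega
      have e2 : 2*(j+1) = 2*j+2 := by omega
      have e3 : r+2-(j+1) = r+1-j := by omega
      rw [e1, e2, e3]
    · simp
  have hext : (∑ j ∈ range (r+1), ((r+1+j).choose (2*j+2) : ℝ) * (t-1)^(2*j+2) * t^(r+1-j))
      = ∑ j ∈ range r, ((r+1+j).choose (2*j+2) : ℝ) * (t-1)^(2*j+2) * t^(r+1-j) := by
    rw [Finset.sum_range_succ]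
    have h0 : (r+1+r).choose (2*r+2) = 0 := Nat.choose_eq_zero_of_lt (by omega)
    rw [h0]
    simp
  have hTtrim : (∑ j ∈ range (r+2), (2*((r+1+j).choose (2*j+1) : ℝ) + ((r+1+j).choose (2*j+2) : ℝ))
          * (t-1)^(2*j+2) * t^(r+1-j))
      = ∑ j ∈ range (r+1), (2*((r+1+j).choose (2*j+1) : ℝ) + ((r+1+j).choose (2*j+2) : ℝ))
          * (t-1)^(2*j+2) * t^(r+1-j) := by
    rw [Finset.sum_range_succ]
    have h0 : (r+1+(r+1)).choose (2*(r+1)+1) = 0 := Nat.choose_eq_zero_of_lt (by omega)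
    have h1 : (r+1+(r+1)).choose (2*(r+1)+2) = 0 := Nat.choose_eq_zero_of_lt (by omega)
    rw [h0, h1]
    simp
  have hsplit : (∑ j ∈ range (r+1), (2*((r+1+j).choose (2*j+1) : ℝ) + 2*((r+1+j).choose (2*j+2) : ℝ))
          * (t-1)^(2*j+2) * t^(r+1-j))
      = (∑ j ∈ range (r+1), (2*((r+1+j).choose (2*j+1) : ℝ) + ((r+1+j).choose (2*j+2) : ℝ))
          * (t-1)^(2*j+2) * t^(r+1-j))
        + ∑ j ∈ range (r+1), ((r+1+j).choose (2*j+2) : ℝ) * (t-1)^(2*j+2) * t^(r+1-j) := by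
    rw [← Finset.sum_add_distrib]
    refine Finset.sum_congr rfl fun j hj => ?_
    ring
  linarith [hL, hQ, hQ0, hQs, hQ0s, hext, hTtrim, hsplit]

open Finset in
lemma keyPoly (r : ℕ) (t : ℝ) : t^(2*r+1) + 1 = (t+1) * polyA r t := by
  induction r using Nat.twoStepInduction with
  | zero => simp [polyA]
  | one => simp [polyA, Finset.sum_range_succ]; ring
  | more r ih1 ih2 =>
    have hrec := polyA_rec r t
    linear_combination (t^2+1) * ih2 - t^2 * ih1 - (t+1) * hrec

lemma keyPolyN (m n : ℕ) (hn : n ≤ m) (t : ℝ) :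
    (t+1) * ∑ j ∈ Finset.range (m-n+1), ((m-n+j).choose (2*j) : ℝ) * (t-1)^(2*j) * t^(m-j)
      = t^n + t^(2*m+1-n) := by
  have h1 : ∑ j ∈ Finset.range (m-n+1), ((m-n+j).choose (2*j) : ℝ) * (t-1)^(2*j) * t^(m-j)
      = t^n * polyA (m-n) t := by
    rw [polyA, Finset.mul_sum]
    refine Finset.sum_congr rfl fun j hj => ?_
    rw [Finset.mem_range] at hj
    have h : m - j = n + (m - n - j) := by omega
    rw [h, pow_add]; ring
  rw [h1, ← mul_assoc, mul_comm (t+1) (t^n), mul_assoc, ← keyPoly (m-n) t]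
  have h2 : 2*m+1-n = n + (2*(m-n)+1) := by omega
  rw [h2, pow_add]; ring



lemma Dpos (d₁ : ℝ) (hd : -1 < d₁) (z : ℝ) : 0 < z^4+2*d₁*z^2+1 := by
  nlinarith [sq_nonneg (z^2-1), mul_nonneg (by linarith : (0:ℝ) ≤ 1+d₁) (sq_nonneg z)]

lemma integrable_bound {f : ℝ → ℝ} (hf : Continuous f) {C : ℝ}
    (h : ∀ x, |f x| ≤ C * (1+x^2)⁻¹) : Integrable f := by
  refine (integrable_inv_one_add_sq.const_mul C).mono' hf.aestronglyMeasurable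
    (Filter.Eventually.of_forall fun x => ?_)
  rw [Real.norm_eq_abs]
  exact h x

lemma intD (m : ℕ) (d₁ : ℝ) (hd : -1 < d₁) (a : ℕ) (ha : a ≤ 2*m+1) :
    Integrable (fun z : ℝ => z^(2*a)/(z^4+2*d₁*z^2+1)^(m+1)) := by
  set δ := min 1 ((1+d₁)/2) with hδdef
  have hδ0 : 0 < δ := lt_min one_pos (by linarith)
  have hδ1 : δ ≤ 1 := min_le_left _ _
  have hδ2 : δ ≤ (1+d₁)/2 := min_le_right _ _
  apply integrable_bound (C := (δ^(m+1))⁻¹)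
  · exact (continuous_pow _).div ((continuous_pow 4 |>.add
      (((continuous_const.mul (continuous_pow 2))))).add continuous_const |>.pow _)
      fun z => (pow_pos (Dpos d₁ hd z) _).ne'
  · intro x
    have hDx := Dpos d₁ hd x
    have key1 : δ*(1+x^2)^2 ≤ x^4+2*d₁*x^2+1 := by
      nlinarith [mul_nonneg (by linarith : (0:ℝ) ≤ 1-δ) (sq_nonneg (x^2-1)),
        mul_nonneg (by linarith : (0:ℝ) ≤ 2*(1+d₁)-4*δ) (sq_nonneg x)]
    have hD : δ^(m+1) * (1+x^2)^(2*m+2) ≤ (x^4+2*d₁*x^2+1)^(m+1) := by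
      have e : 2*m+2 = 2*(m+1) := by ring
      rw [e, pow_mul, ← mul_pow]
      exact pow_le_pow_left₀ (by positivity) key1 (m+1)
    have hN : x^(2*a) ≤ (1+x^2)^(2*m+1) := by
      calc x^(2*a) = (x^2)^a := by rw [pow_mul]
        _ ≤ (1+x^2)^a := pow_le_pow_left₀ (sq_nonneg x) (by linarith) a
        _ ≤ (1+x^2)^(2*m+1) := pow_le_pow_right₀ (by nlinarith [sq_nonneg x]) ha
    have hxa : (0:ℝ) ≤ x^(2*a) := by rw [pow_mul]; positivity
    have habs : |x^(2*a)/(x^4+2*d₁*x^2+1)^(m+1)| = x^(2*a)/(x^4+2*d₁*x^2+1)^(m+1) :=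
      abs_of_nonneg (div_nonneg hxa (by positivity))
    rw [habs]
    have hxne : ((1:ℝ)+x^2) ≠ 0 := by positivity
    have hxne2 : ((1:ℝ)+x^2)^(2*m+1) ≠ 0 := pow_ne_zero _ hxne
    have hD' : δ^(m+1) * ((1+x^2)^(2*m+1) * (1+x^2)) ≤ (x^4+2*d₁*x^2+1)^(m+1) := by
      rw [show ((1:ℝ)+x^2)^(2*m+1) * (1+x^2) = (1+x^2)^(2*m+2) from by rw [← pow_succ]]
      exact hD
    calc x^(2*a)/(x^4+2*d₁*x^2+1)^(m+1)
        ≤ (1+x^2)^(2*m+1) / (δ^(m+1) * ((1+x^2)^(2*m+1) * (1+x^2))) := by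
          apply div_le_div₀ (by positivity) hN (by positivity) hD'
      _ = (δ^(m+1))⁻¹ * (1+x^2)⁻¹ := by
          rw [show δ^(m+1) * ((1+x^2)^(2*m+1) * (1+x^2))
              = (1+x^2)^(2*m+1) * (δ^(m+1) * (1+x^2)) from by ring,
            div_mul_eq_div_div, div_self hxne2, one_div, mul_inv]

lemma intJ (m : ℕ) (c : ℝ) (hc : 0 < c) (j : ℕ) (hj : j ≤ m) :
    Integrable (fun u : ℝ => u^(2*j)/(u^2+c)^(m+1)) := by
  set ε := min 1 c with hεdef
  have hε0 : 0 < ε := lt_min one_pos hc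
  have hε1 : ε ≤ 1 := min_le_left _ _
  have hε2 : ε ≤ c := min_le_right _ _
  apply integrable_bound (C := (ε^(m+1))⁻¹)
  · exact (continuous_pow _).div ((continuous_pow 2 |>.add continuous_const).pow _)
      fun u => (pow_pos (by positivity) _).ne'
  · intro x
    have key1 : ε*(1+x^2) ≤ x^2+c := by nlinarith [sq_nonneg x]
    have hD : ε^(m+1) * (1+x^2)^(m+1) ≤ (x^2+c)^(m+1) := by
      rw [← mul_pow]
      exact pow_le_pow_left₀ (by positivity) key1 (m+1)
    have hN : x^(2*j) ≤ (1+x^2)^m := by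
      calc x^(2*j) = (x^2)^j := by rw [pow_mul]
        _ ≤ (1+x^2)^j := pow_le_pow_left₀ (sq_nonneg x) (by linarith) j
        _ ≤ (1+x^2)^m := pow_le_pow_right₀ (by nlinarith [sq_nonneg x]) hj
    have hxa : (0:ℝ) ≤ x^(2*j) := by rw [pow_mul]; positivity
    have habs : |x^(2*j)/(x^2+c)^(m+1)| = x^(2*j)/(x^2+c)^(m+1) :=
      abs_of_nonneg (div_nonneg hxa (by positivity))
    rw [habs]
    have hxne : ((1:ℝ)+x^2) ≠ 0 := by positivity
    have hxne2 : ((1:ℝ)+x^2)^m ≠ 0 := pow_ne_zero _ hxne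
    have hD' : ε^(m+1) * ((1+x^2)^m * (1+x^2)) ≤ (x^2+c)^(m+1) := by
      rw [← pow_succ]
      exact hD
    calc x^(2*j)/(x^2+c)^(m+1)
        ≤ (1+x^2)^m / (ε^(m+1) * ((1+x^2)^m * (1+x^2))) := by
          apply div_le_div₀ (by positivity) hN (by positivity) hD'
      _ = (ε^(m+1))⁻¹ * (1+x^2)⁻¹ := by
          rw [show ε^(m+1) * ((1+x^2)^m * (1+x^2))
              = (1+x^2)^m * (ε^(m+1) * (1+x^2)) from by ring,
            div_mul_eq_div_div, div_self hxne2, one_div, mul_inv]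


lemma img_inv : (fun z : ℝ => z⁻¹) '' (Ioi 0) = Ioi 0 := by
  ext x
  simp only [Set.mem_image, Set.mem_Ioi]
  constructor
  · rintro ⟨z, hz, rfl⟩; exact inv_pos.mpr hz
  · intro hx; exact ⟨x⁻¹, inv_pos.mpr hx, inv_inv x⟩

lemma subst_inv (g : ℝ → ℝ) :
    ∫ x in Ioi (0:ℝ), g x = ∫ z in Ioi (0:ℝ), (z^2)⁻¹ * g z⁻¹ := by
  conv_lhs => rw [← img_inv]
  rw [MeasureTheory.integral_image_eq_integral_abs_deriv_smul measurableSet_Ioi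
    (f' := fun z => -(z^2)⁻¹) (fun x hx => (hasDerivAt_inv (ne_of_gt hx)).hasDerivWithinAt)
    (Set.injOn_of_injective inv_injective) g]
  apply setIntegral_congr_fun measurableSet_Ioi
  intro z hz
  have hz' : (0:ℝ) < z := hz
  simp only [smul_eq_mul]
  rw [abs_neg, abs_inv, abs_of_pos (by positivity : (0:ℝ) < z^2)]

lemma img_two_div : (fun z : ℝ => 2*z⁻¹) '' (Ioi 0) = Ioi 0 := by
  ext x
  simp only [Set.mem_image, Set.mem_Ioi]
  constructor
  · rintro ⟨z, hz, rfl⟩; exact mul_pos two_pos (inv_pos.mpr hz)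
  · intro hx
    refine ⟨2*x⁻¹, mul_pos two_pos (inv_pos.mpr hx), ?_⟩
    rw [mul_inv, inv_inv]
    rw [← mul_assoc, mul_inv_cancel₀ two_ne_zero, one_mul]

lemma subst_two_div (g : ℝ → ℝ) :
    ∫ x in Ioi (0:ℝ), g x = ∫ z in Ioi (0:ℝ), (2*(z^2)⁻¹) * g (2*z⁻¹) := by
  conv_lhs => rw [← img_two_div]
  rw [MeasureTheory.integral_image_eq_integral_abs_deriv_smul measurableSet_Ioi
    (f' := fun z => 2*(-(z^2)⁻¹))
    (fun x hx => ((hasDerivAt_inv (ne_of_gt hx)).const_mul 2).hasDerivWithinAt)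
    (fun a ha b hb h => inv_injective (mul_left_cancel₀ two_ne_zero h)) g]
  apply setIntegral_congr_fun measurableSet_Ioi
  intro z hz
  have hz' : (0:ℝ) < z := hz
  simp only [smul_eq_mul]
  rw [abs_mul, abs_neg, abs_inv, abs_of_pos (by positivity : (0:ℝ) < z^2), abs_two]

lemma img_sub_inv : (fun z : ℝ => z - z⁻¹) '' (Ioi 0) = univ := by
  ext u
  simp only [Set.mem_image, Set.mem_Ioi, Set.mem_univ, iff_true]
  have hs : Real.sqrt (u^2+4) ^ 2 = u^2+4 := Real.sq_sqrt (by positivity)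
  have habs : |u| < Real.sqrt (u^2+4) := by
    rw [← Real.sqrt_sq_eq_abs]
    exact Real.sqrt_lt_sqrt (sq_nonneg u) (by linarith)
  have habs' := abs_lt.mp habs
  refine ⟨(u + Real.sqrt (u^2+4))/2, by linarith [habs'.1], ?_⟩
  have hone : (u + Real.sqrt (u^2+4))/2 * ((Real.sqrt (u^2+4) - u)/2) = 1 := by
    linear_combination hs / 4
  show (u + Real.sqrt (u^2+4))/2 - ((u + Real.sqrt (u^2+4))/2)⁻¹ = u
  rw [inv_eq_of_mul_eq_one_right hone]
  ring

lemma subst_sub_inv (g : ℝ → ℝ) :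
    ∫ x, g x = ∫ z in Ioi (0:ℝ), (1+(z^2)⁻¹) * g (z - z⁻¹) := by
  have hmono : StrictMonoOn (fun z : ℝ => z - z⁻¹) (Ioi 0) := by
    intro a ha b hb hab
    have ha' : (0:ℝ) < a := ha
    have hb' : (0:ℝ) < b := hb
    have : b⁻¹ < a⁻¹ := by
      rw [inv_lt_inv₀ hb' ha']
      exact hab
    simp only
    linarith
  rw [← MeasureTheory.setIntegral_univ, ← img_sub_inv,
    MeasureTheory.integral_image_eq_integral_abs_deriv_smul measurableSet_Ioi
    (f' := fun z => 1+(z^2)⁻¹)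
    (fun x hx => ?_) hmono.injOn g]
  · apply setIntegral_congr_fun measurableSet_Ioi
    intro z hz
    have hz' : (0:ℝ) < z := hz
    simp only [smul_eq_mul]
    rw [abs_of_pos (by positivity : (0:ℝ) < 1+(z^2)⁻¹)]
  · have hx' : (0:ℝ) < x := hx
    have h := (hasDerivAt_id' x).sub (hasDerivAt_inv (ne_of_gt hx'))
    have h' := h.hasDerivWithinAt (s := Ioi 0)
    rw [sub_neg_eq_add] at h'
    exact h'

theorem reduction_formula_p1 (m n : ℕ) (hn : n ≤ m) (d₁ : ℝ) (hd : -1 < d₁) :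
    ∫ z in Set.Ioi (0 : ℝ), z ^ (2 * n) / (z ^ 4 + 2 * d₁ * z ^ 2 + 1) ^ (m + 1)
      = 2 ^ (-(m : ℝ))
        * ∑ j ∈ Finset.range (m - n + 1),
            4 ^ j * (Nat.choose (m - n + j) (2 * j) : ℝ)
              * ∫ z in Set.Ioi (0 : ℝ),
                  z ^ (2 * (m - j)) / ((1 + d₁) * z ^ 2 + 2) ^ (m + 1) := by
  have hd1 : (0:ℝ) < 1+d₁ := by linarith
  have hc : (0:ℝ) < 2*(1+d₁) := by linarith
  -- Step 1 : z ↦ 1/z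
  have s1 : (∫ z in Set.Ioi (0:ℝ), z^(2*n)/(z^4+2*d₁*z^2+1)^(m+1))
      = ∫ z in Set.Ioi (0:ℝ), z^(2*(2*m+1-n))/(z^4+2*d₁*z^2+1)^(m+1) := by
    rw [subst_inv (fun z => z^(2*(2*m+1-n))/(z^4+2*d₁*z^2+1)^(m+1))]
    apply setIntegral_congr_fun measurableSet_Ioi
    intro z hz
    have hz' : (0:ℝ) < z := hz
    have hzne : z ≠ 0 := ne_of_gt hz'
    have hD := Dpos d₁ hd z
    have hDne : (z^4+2*d₁*z^2+1) ≠ 0 := ne_of_gt hD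
    simp only
    have hinv : (z⁻¹)^4+2*d₁*(z⁻¹)^2+1 = (z^4+2*d₁*z^2+1)/z^4 := by
      field_simp
      ring
    have hpow : (z⁻¹)^(2*(2*m+1-n)) = (z^(2*(2*m+1-n)))⁻¹ := by rw [inv_pow]
    have hmul : z^(2*(2*m+1-n)) * z^(2*n) = z^(4*m+2) := by
      rw [← pow_add]
      congr 1
      omega
    rw [hinv, hpow, div_pow]
    have hzM : z^(2*(2*m+1-n)) = z^(4*m+2) / z^(2*n) := by
      rw [eq_div_iff (pow_ne_zero _ hzne), ← pow_add]
      congr 1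
      omega
    rw [hzM]
    field_simp
    ring
  -- Step 2 : symmetrize
  have s2 : (∫ z in Set.Ioi (0:ℝ), z^(2*n)/(z^4+2*d₁*z^2+1)^(m+1))
        + (∫ z in Set.Ioi (0:ℝ), z^(2*n)/(z^4+2*d₁*z^2+1)^(m+1))
      = ∫ z in Set.Ioi (0:ℝ), (z^(2*n)+z^(2*(2*m+1-n)))/(z^4+2*d₁*z^2+1)^(m+1) := by
    nth_rewrite 2 [s1]
    rw [← integral_add ((intD m d₁ hd n (by omega)).integrableOn)
      ((intD m d₁ hd (2*m+1-n) (by omega)).integrableOn)]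
    apply setIntegral_congr_fun measurableSet_Ioi
    intro z hz
    simp only
    rw [← add_div]
  -- Step 3 : pointwise rewrite to pullback form
  have s3 : (∫ z in Set.Ioi (0:ℝ), (z^(2*n)+z^(2*(2*m+1-n)))/(z^4+2*d₁*z^2+1)^(m+1))
      = ∫ z in Set.Ioi (0:ℝ), (1+(z^2)⁻¹) *
          ∑ j ∈ Finset.range (m-n+1), ((m-n+j).choose (2*j) : ℝ) *
            ((z-z⁻¹)^(2*j)/((z-z⁻¹)^2+2*(1+d₁))^(m+1)) := by
    apply setIntegral_congr_fun measurableSet_Ioi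
    intro z hz
    have hz' : (0:ℝ) < z := hz
    have hzne : z ≠ 0 := ne_of_gt hz'
    have hD := Dpos d₁ hd z
    have hDne : (z^4+2*d₁*z^2+1) ≠ 0 := ne_of_gt hD
    have hz2 : (z:ℝ)^2 ≠ 0 := pow_ne_zero _ hzne
    simp only
    have hu : (z-z⁻¹)^2+2*(1+d₁) = (z^4+2*d₁*z^2+1)/z^2 := by
      field_simp
      ring
    have hw : z-z⁻¹ = (z^2-1)/z := by
      field_simp
    rw [hu, hw]
    have hone : ((1:ℝ)+(z^2)⁻¹) ≠ 0 := by positivity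
    have hterm : ∀ j ∈ Finset.range (m-n+1),
        ((m-n+j).choose (2*j) : ℝ) * (((z^2-1)/z)^(2*j)/(((z^4+2*d₁*z^2+1)/z^2)^(m+1)))
          = (1+(z^2)⁻¹)⁻¹ *
            ((z^2+1) * (((m-n+j).choose (2*j) : ℝ) * (z^2-1)^(2*j) * (z^2)^(m-j))
              / (z^4+2*d₁*z^2+1)^(m+1)) := by
      intro j hj
      rw [Finset.mem_range] at hj
      have hjm : j ≤ m := by omega
      rw [div_pow, div_pow, pow_sub₀ (z^2) hz2 hjm]
      field_simp
      ring
    rw [Finset.sum_congr rfl hterm, ← Finset.mul_sum, ← mul_assoc,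
      mul_inv_cancel₀ hone, one_mul, ← Finset.sum_div, ← Finset.mul_sum,
      keyPolyN m n hn (z^2), pow_mul z 2 n, pow_mul z 2 (2*m+1-n)]
  -- Step 4 : Glasser substitution u = z - 1/z
  have s4 : (∫ z in Set.Ioi (0:ℝ), (1+(z^2)⁻¹) *
          ∑ j ∈ Finset.range (m-n+1), ((m-n+j).choose (2*j) : ℝ) *
            ((z-z⁻¹)^(2*j)/((z-z⁻¹)^2+2*(1+d₁))^(m+1)))
      = ∫ u : ℝ, ∑ j ∈ Finset.range (m-n+1), ((m-n+j).choose (2*j) : ℝ) *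
            (u^(2*j)/(u^2+2*(1+d₁))^(m+1)) :=
    (subst_sub_inv (fun u => ∑ j ∈ Finset.range (m-n+1), ((m-n+j).choose (2*j) : ℝ) *
            (u^(2*j)/(u^2+2*(1+d₁))^(m+1)))).symm
  -- Step 5 : exchange sum and integral
  have s5 : (∫ u : ℝ, ∑ j ∈ Finset.range (m-n+1), ((m-n+j).choose (2*j) : ℝ) *
            (u^(2*j)/(u^2+2*(1+d₁))^(m+1)))
      = ∑ j ∈ Finset.range (m-n+1), ((m-n+j).choose (2*j) : ℝ) *
            ∫ u : ℝ, u^(2*j)/(u^2+2*(1+d₁))^(m+1) := by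
    rw [MeasureTheory.integral_finset_sum _ (fun j hj => ((intJ m _ hc j
      (by simp only [Finset.mem_range] at hj; omega)).const_mul _))]
    exact Finset.sum_congr rfl fun j hj => integral_const_mul _ _
  -- Step 6 : evenness
  have s6 : ∀ j, (∫ u : ℝ, u^(2*j)/(u^2+2*(1+d₁))^(m+1))
      = 2 * ∫ u in Set.Ioi (0:ℝ), u^(2*j)/(u^2+2*(1+d₁))^(m+1) := by
    intro j
    rw [← integral_comp_abs (f := fun u => u^(2*j)/(u^2+2*(1+d₁))^(m+1))]
    congr 1
    funext x
    simp [pow_mul, sq_abs]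
  -- Step 7 : substitution u = 2/z
  have s7 : ∀ j, j ≤ m → (∫ u in Set.Ioi (0:ℝ), u^(2*j)/(u^2+2*(1+d₁))^(m+1))
      = (2:ℝ)^(2*j)/2^m * ∫ z in Set.Ioi (0:ℝ), z^(2*(m-j))/((1+d₁)*z^2+2)^(m+1) := by
    intro j hj
    rw [subst_two_div (fun u => u^(2*j)/(u^2+2*(1+d₁))^(m+1)),
      ← integral_const_mul]
    apply setIntegral_congr_fun measurableSet_Ioi
    intro z hz
    have hz' : (0:ℝ) < z := hz
    have hzne : z ≠ 0 := ne_of_gt hz'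
    have hK : (0:ℝ) < (1+d₁)*z^2+2 := by nlinarith [sq_nonneg z]
    have hKne : ((1+d₁)*z^2+2) ≠ 0 := ne_of_gt hK
    have h2m : ((2:ℝ)^m) ≠ 0 := by positivity
    simp only
    have hden : (2*z⁻¹)^2+2*(1+d₁) = (2*((1+d₁)*z^2+2))/z^2 := by
      field_simp
      ring
    have hnum : (2*z⁻¹)^(2*j) = 2^(2*j)/z^(2*j) := by
      rw [mul_pow, inv_pow, ← div_eq_mul_inv]
    have hzmj : z^(2*(m-j)) = z^(2*m)/z^(2*j) := by
      rw [eq_div_iff (pow_ne_zero _ hzne), ← pow_add]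
      congr 1
      omega
    rw [hden, hnum, hzmj, div_pow, mul_pow]
    field_simp
    ring
  -- Final assembly
  have hsum : ∑ j ∈ Finset.range (m-n+1), ((m-n+j).choose (2*j) : ℝ) *
        (2 * ((2:ℝ)^(2*j)/2^m * ∫ z in Set.Ioi (0:ℝ), z^(2*(m-j))/((1+d₁)*z^2+2)^(m+1)))
      = 2 * (((2:ℝ)^m)⁻¹ * ∑ j ∈ Finset.range (m-n+1),
          4^j * ((m-n+j).choose (2*j) : ℝ) *
            ∫ z in Set.Ioi (0:ℝ), z^(2*(m-j))/((1+d₁)*z^2+2)^(m+1)) := by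
    rw [Finset.mul_sum, Finset.mul_sum]
    apply Finset.sum_congr rfl
    intro j hj
    have h4 : (4:ℝ)^j = 2^(2*j) := by
      rw [pow_mul]
      norm_num
    rw [h4]
    ring
  have hrpow : (2:ℝ)^(-(m:ℝ)) = ((2:ℝ)^m)⁻¹ := by
    rw [← Real.rpow_natCast 2 m, ← Real.rpow_neg (by norm_num)]
  have key : (∫ z in Set.Ioi (0:ℝ), z^(2*n)/(z^4+2*d₁*z^2+1)^(m+1))
        + (∫ z in Set.Ioi (0:ℝ), z^(2*n)/(z^4+2*d₁*z^2+1)^(m+1))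
      = 2 * (((2:ℝ)^m)⁻¹ * ∑ j ∈ Finset.range (m-n+1),
          4^j * ((m-n+j).choose (2*j) : ℝ) *
            ∫ z in Set.Ioi (0:ℝ), z^(2*(m-j))/((1+d₁)*z^2+2)^(m+1)) := by
    rw [s2, s3, s4, s5, ← hsum]
    apply Finset.sum_congr rfl
    intro j hj
    rw [Finset.mem_range] at hj
    rw [s6 j, s7 j (by omega)]
  have hgoal : (∫ z in Set.Ioi (0:ℝ), z^(2*n)/(z^4+2*d₁*z^2+1)^(m+1))
      = ((2:ℝ)^m)⁻¹ * ∑ j ∈ Finset.range (m-n+1),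
          4^j * ((m-n+j).choose (2*j) : ℝ) *
            ∫ z in Set.Ioi (0:ℝ), z^(2*(m-j))/((1+d₁)*z^2+2)^(m+1) := by
    linarith [key]
  rw [hrpow]
  exact hgoal
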